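/- Let E be a finite-dimensional real normed vector space and C : E → E a C^∞ map such that the induced multiplication (X∘Y)(p) = (D²C)(p)(X(p), Y(p)) on smooth vector fields is associative. Then (E, ∘) satisfies the Hertling–Manin F-manifold identity: for all smooth vector fields X, Y, Z, W one has P_{X∘Y}(Z,W) = X∘P_Y(Z,W) + Y∘P_X(Z,W), where P_X(Z,W) := [X, Z∘W] − [X,Z]∘W − Z∘[X,W]. -/

import Mathlib

open ContDiff

variable {E : Type*} [NormedAddCommGroup E] [NormedSpace ℝ E]

/-- Lie bracket of vector fields on a normed space:
`[X,Y](p) = (DY)(p)(X(p)) - (DX)(p)(Y(p))`. -/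
noncomputable def lieB (X Y : E → E) : E → E :=
  fun p => fderiv ℝ Y p (X p) - fderiv ℝ X p (Y p)

/-- Multiplication on vector fields induced by a vector potential `C`:
`(X ∘ Y)(p) = (D²C)(p)(X(p), Y(p))`. -/
noncomputable def mulC (C : E → E) (X Y : E → E) : E → E :=
  fun p => fderiv ℝ (fderiv ℝ C) p (X p) (Y p)

/-- The Hertling–Manin expression `P_X(Z,W) = [X, Z∘W] - [X,Z]∘W - Z∘[X,W]`. -/
noncomputable def hmP (C : E → E) (X Z W : E → E) : E → E :=
  fun p => lieB X (mulC C Z W) p - mulC C (lieB X Z) W p - mulC C Z (lieB X W) p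

lemma aux_diffm (C : E → E) (hC : ContDiff ℝ ∞ C) :
    ContDiff ℝ ∞ (fderiv ℝ (fderiv ℝ C)) := by
  have h1 : ContDiff ℝ ∞ (fderiv ℝ C) := hC.fderiv_right (by norm_cast)
  exact h1.fderiv_right (by norm_cast)

lemma aux_fderiv_apply2 (C : E → E) (hC : ContDiff ℝ ∞ C) {Z W : E → E}
    (hZ : Differentiable ℝ Z) (hW : Differentiable ℝ W) (p a : E) :
    fderiv ℝ (fun q => fderiv ℝ (fderiv ℝ C) q (Z q) (W q)) p a
      = fderiv ℝ (fderiv ℝ (fderiv ℝ C)) p a (Z p) (W p)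
        + fderiv ℝ (fderiv ℝ C) p (fderiv ℝ Z p a) (W p)
        + fderiv ℝ (fderiv ℝ C) p (Z p) (fderiv ℝ W p a) := by
  have hm : Differentiable ℝ (fderiv ℝ (fderiv ℝ C)) :=
    (aux_diffm C hC).differentiable (by norm_cast)
  have h1 := ((hm p).hasFDerivAt).clm_apply (hZ p).hasFDerivAt
  have h2 := h1.clm_apply (hW p).hasFDerivAt
  have h2' : HasFDerivAt (fun q => fderiv ℝ (fderiv ℝ C) q (Z q) (W q)) _ p := h2
  rw [h2'.fderiv]
  simp [ContinuousLinearMap.add_apply, ContinuousLinearMap.comp_apply,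
    ContinuousLinearMap.flip_apply]
  abel

lemma aux_fderiv_m (C : E → E) (hC : ContDiff ℝ ∞ C) (u v : E) (p a : E) :
    fderiv ℝ (fun q => fderiv ℝ (fderiv ℝ C) q u v) p a
      = fderiv ℝ (fderiv ℝ (fderiv ℝ C)) p a u v := by
  have h := aux_fderiv_apply2 C hC (Z := fun _ => u) (W := fun _ => v)
    (differentiable_const u) (differentiable_const v) p a
  simpa using h

lemma aux_m_comm (C : E → E) (hC : ContDiff ℝ ∞ C) (p u v : E) :
    fderiv ℝ (fderiv ℝ C) p u v = fderiv ℝ (fderiv ℝ C) p v u :=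
  (hC.contDiffAt.isSymmSndFDerivAt (by simp only [minSmoothness_of_isRCLikeNormedField]; norm_cast)) u v

lemma aux_T_swap12 (C : E → E) (hC : ContDiff ℝ ∞ C) (p a u v : E) :
    fderiv ℝ (fderiv ℝ (fderiv ℝ C)) p a u v
      = fderiv ℝ (fderiv ℝ (fderiv ℝ C)) p u a v := by
  have hg : ContDiff ℝ ∞ (fderiv ℝ C) := hC.fderiv_right (by norm_cast)
  have h := ((hg.contDiffAt (x := p)).isSymmSndFDerivAt (by simp only [minSmoothness_of_isRCLikeNormedField]; norm_cast)) a u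
  exact congrFun (congrArg _ h) v

lemma aux_T_swap23 (C : E → E) (hC : ContDiff ℝ ∞ C) (p a u v : E) :
    fderiv ℝ (fderiv ℝ (fderiv ℝ C)) p a u v
      = fderiv ℝ (fderiv ℝ (fderiv ℝ C)) p a v u := by
  have h1 : (fun q => fderiv ℝ (fderiv ℝ C) q u v)
      = (fun q => fderiv ℝ (fderiv ℝ C) q v u) :=
    funext fun q => aux_m_comm C hC q u v
  rw [← aux_fderiv_m C hC u v p a, h1, aux_fderiv_m C hC v u p a]

lemma aux_star (C : E → E) (hC : ContDiff ℝ ∞ C)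
    (hassoc : ∀ p u v w : E,
      fderiv ℝ (fderiv ℝ C) p (fderiv ℝ (fderiv ℝ C) p u v) w
        = fderiv ℝ (fderiv ℝ C) p u (fderiv ℝ (fderiv ℝ C) p v w))
    (p a u v w : E) :
    fderiv ℝ (fderiv ℝ (fderiv ℝ C)) p a (fderiv ℝ (fderiv ℝ C) p u v) w
      + fderiv ℝ (fderiv ℝ C) p (fderiv ℝ (fderiv ℝ (fderiv ℝ C)) p a u v) w
    = fderiv ℝ (fderiv ℝ (fderiv ℝ C)) p a u (fderiv ℝ (fderiv ℝ C) p v w)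
      + fderiv ℝ (fderiv ℝ C) p u (fderiv ℝ (fderiv ℝ (fderiv ℝ C)) p a v w) := by
  have hmc : ContDiff ℝ ∞ (fderiv ℝ (fderiv ℝ C)) := aux_diffm C hC
  have hZ1 : Differentiable ℝ (fun q => fderiv ℝ (fderiv ℝ C) q u v) :=
    ((hmc.clm_apply contDiff_const).clm_apply contDiff_const).differentiable (by norm_cast)
  have hW2 : Differentiable ℝ (fun q => fderiv ℝ (fderiv ℝ C) q v w) :=
    ((hmc.clm_apply contDiff_const).clm_apply contDiff_const).differentiable (by norm_cast)
  have hfun : (fun q => fderiv ℝ (fderiv ℝ C) q (fderiv ℝ (fderiv ℝ C) q u v) w)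
      = (fun q => fderiv ℝ (fderiv ℝ C) q u (fderiv ℝ (fderiv ℝ C) q v w)) :=
    funext fun q => hassoc q u v w
  have e1 := aux_fderiv_apply2 C hC (Z := fun q => fderiv ℝ (fderiv ℝ C) q u v)
    (W := fun _ => w) hZ1 (differentiable_const w) p a
  have e2 := aux_fderiv_apply2 C hC (Z := fun _ => u)
    (W := fun q => fderiv ℝ (fderiv ℝ C) q v w) (differentiable_const u) hW2 p a
  rw [aux_fderiv_m C hC u v p a] at e1
  rw [aux_fderiv_m C hC v w p a] at e2
  rw [hfun] at e1
  rw [e2] at e1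
  simpa using e1.symm

/-- if the multiplication induced by a smooth vector potential `C` is
associative, then it satisfies the Hertling–Manin F-manifold identity. -/
theorem stmt0 {E : Type*} [NormedAddCommGroup E] [NormedSpace ℝ E] [FiniteDimensional ℝ E]
    (C : E → E) (hC : ContDiff ℝ ∞ C)
    (hassoc : ∀ p u v w : E,
      fderiv ℝ (fderiv ℝ C) p (fderiv ℝ (fderiv ℝ C) p u v) w
        = fderiv ℝ (fderiv ℝ C) p u (fderiv ℝ (fderiv ℝ C) p v w)) :
    ∀ X Y Z W : E → E, ContDiff ℝ ∞ X → ContDiff ℝ ∞ Y → ContDiff ℝ ∞ Z → ContDiff ℝ ∞ W →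
      hmP C (mulC C X Y) Z W
        = fun p => mulC C X (hmP C Y Z W) p + mulC C Y (hmP C X Z W) p := by

  intro X Y Z W hX hY hZ hW
  funext p
  have hXd : Differentiable ℝ X := hX.differentiable (by norm_cast)
  have hYd : Differentiable ℝ Y := hY.differentiable (by norm_cast)
  have hZd : Differentiable ℝ Z := hZ.differentiable (by norm_cast)
  have hWd : Differentiable ℝ W := hW.differentiable (by norm_cast)
  have hXY : ∀ a, fderiv ℝ (fun q => fderiv ℝ (fderiv ℝ C) q (X q) (Y q)) p a
      = fderiv ℝ (fderiv ℝ (fderiv ℝ C)) p (a) (X p) (Y p) + fderiv ℝ (fderiv ℝ C) p (fderiv ℝ X p (a)) (Y p) + fderiv ℝ (fderiv ℝ C) p (X p) (fderiv ℝ Y p (a)) :=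
    fun a => aux_fderiv_apply2 C hC hXd hYd p a
  have hZW : ∀ a, fderiv ℝ (fun q => fderiv ℝ (fderiv ℝ C) q (Z q) (W q)) p a
      = fderiv ℝ (fderiv ℝ (fderiv ℝ C)) p (a) (Z p) (W p) + fderiv ℝ (fderiv ℝ C) p (fderiv ℝ Z p (a)) (W p) + fderiv ℝ (fderiv ℝ C) p (Z p) (fderiv ℝ W p (a)) :=
    fun a => aux_fderiv_apply2 C hC hZd hWd p a
  have hcomm := aux_m_comm C hC p
  have s12 := aux_T_swap12 C hC p
  have s23 := aux_T_swap23 C hC p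
  have hassocp := hassoc p
  have hrot : ∀ u v w : E, fderiv ℝ (fderiv ℝ C) p u (fderiv ℝ (fderiv ℝ C) p v w)
      = fderiv ℝ (fderiv ℝ C) p v (fderiv ℝ (fderiv ℝ C) p u w) := fun u v w => by
    rw [← hassocp, hcomm u v, hassocp]
  have hmulXY : mulC C X Y = fun q => fderiv ℝ (fderiv ℝ C) q (X q) (Y q) := rfl
  have hmulZW : mulC C Z W = fun q => fderiv ℝ (fderiv ℝ C) q (Z q) (W q) := rfl
  simp only [hmP, lieB, mulC, hmulXY, hmulZW, hXY, hZW, map_sub, map_add,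
    ContinuousLinearMap.sub_apply, ContinuousLinearMap.add_apply]
  have g1 : fderiv ℝ (fderiv ℝ (fderiv ℝ C)) p (fderiv ℝ (fderiv ℝ C) p (Z p) (W p)) (X p) (Y p) = fderiv ℝ (fderiv ℝ (fderiv ℝ C)) p (X p) (Y p) (fderiv ℝ (fderiv ℝ C) p (Z p) (W p)) := (s12 _ _ _).trans (s23 _ _ _)
  have g2 : fderiv ℝ (fderiv ℝ (fderiv ℝ C)) p (Z p) (X p) (Y p) = fderiv ℝ (fderiv ℝ (fderiv ℝ C)) p (X p) (Y p) (Z p) := (s12 _ _ _).trans (s23 _ _ _)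
  have g3 : fderiv ℝ (fderiv ℝ (fderiv ℝ C)) p (W p) (X p) (Y p) = fderiv ℝ (fderiv ℝ (fderiv ℝ C)) p (X p) (Y p) (W p) := (s12 _ _ _).trans (s23 _ _ _)
  have r1 : fderiv ℝ (fderiv ℝ C) p (fderiv ℝ X p (fderiv ℝ (fderiv ℝ C) p (Z p) (W p))) (Y p) = fderiv ℝ (fderiv ℝ C) p (Y p) (fderiv ℝ X p (fderiv ℝ (fderiv ℝ C) p (Z p) (W p))) := hcomm _ _
  have r2 : fderiv ℝ (fderiv ℝ C) p (fderiv ℝ (fderiv ℝ C) p (fderiv ℝ X p (Z p)) (Y p)) (W p) = fderiv ℝ (fderiv ℝ C) p (Y p) (fderiv ℝ (fderiv ℝ C) p (fderiv ℝ X p (Z p)) (W p)) := (hassocp _ _ _).trans (hrot _ _ _)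
  have r3 : fderiv ℝ (fderiv ℝ C) p (fderiv ℝ (fderiv ℝ C) p (X p) (fderiv ℝ Y p (Z p))) (W p) = fderiv ℝ (fderiv ℝ C) p (X p) (fderiv ℝ (fderiv ℝ C) p (fderiv ℝ Y p (Z p)) (W p)) := hassocp _ _ _
  have r4 : fderiv ℝ (fderiv ℝ C) p (Z p) (fderiv ℝ (fderiv ℝ C) p (fderiv ℝ X p (W p)) (Y p)) = fderiv ℝ (fderiv ℝ C) p (Y p) (fderiv ℝ (fderiv ℝ C) p (Z p) (fderiv ℝ X p (W p))) := by
    rw [hcomm (fderiv ℝ X p (W p)) (Y p)]; exact hrot _ _ _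
  have r5 : fderiv ℝ (fderiv ℝ C) p (Z p) (fderiv ℝ (fderiv ℝ C) p (X p) (fderiv ℝ Y p (W p))) = fderiv ℝ (fderiv ℝ C) p (X p) (fderiv ℝ (fderiv ℝ C) p (Z p) (fderiv ℝ Y p (W p))) := hrot _ _ _
  rw [g1, g2, g3, r1, r2, r3, r4, r5]
  have hA := aux_star C hC hassoc p (Z p) (X p) (Y p) (W p)
  rw [s12 (Z p) (fderiv ℝ (fderiv ℝ C) p (X p) (Y p)) (W p), s12 (Z p) (X p) (Y p),
    s23 (X p) (Z p) (Y p), s12 (Z p) (X p) (fderiv ℝ (fderiv ℝ C) p (Y p) (W p)),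
    s12 (Z p) (Y p) (W p)] at hA
  have hB := aux_star C hC hassoc p (X p) (Z p) (Y p) (W p)
  rw [hcomm (Z p) (Y p), s23 (X p) (Z p) (Y p)] at hB
  have hC' := aux_star C hC hassoc p (X p) (Y p) (Z p) (W p)
  have hBC := hB.symm.trans hC'
  rw [← sub_eq_zero]
  have hzero : ((fderiv ℝ (fderiv ℝ (fderiv ℝ C)) p (fderiv ℝ (fderiv ℝ C) p (X p) (Y p)) (Z p) (W p) + fderiv ℝ (fderiv ℝ C) p (fderiv ℝ (fderiv ℝ (fderiv ℝ C)) p (X p) (Y p) (Z p)) (W p)) + (fderiv ℝ (fderiv ℝ (fderiv ℝ C)) p (X p) (Z p) (fderiv ℝ (fderiv ℝ C) p (Y p) (W p)) + fderiv ℝ (fderiv ℝ C) p (Z p) (fderiv ℝ (fderiv ℝ (fderiv ℝ C)) p (X p) (Y p) (W p)))) - ((fderiv ℝ (fderiv ℝ (fderiv ℝ C)) p (X p) (Z p) (fderiv ℝ (fderiv ℝ C) p (Y p) (W p)) + fderiv ℝ (fderiv ℝ C) p (X p) (fderiv ℝ (fderiv ℝ (fderiv ℝ C)) p (Y p) (Z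 p) (W p))) + (fderiv ℝ (fderiv ℝ (fderiv ℝ C)) p (X p) (Y p) (fderiv ℝ (fderiv ℝ C) p (Z p) (W p)) + fderiv ℝ (fderiv ℝ C) p (Y p) (fderiv ℝ (fderiv ℝ (fderiv ℝ C)) p (X p) (Z p) (W p)))) = (0 : E) := by
    rw [hA, hBC]; abel
  rw [show (0 : E) = ((fderiv ℝ (fderiv ℝ (fderiv ℝ C)) p (fderiv ℝ (fderiv ℝ C) p (X p) (Y p)) (Z p) (W p) + fderiv ℝ (fderiv ℝ C) p (fderiv ℝ (fderiv ℝ (fderiv ℝ C)) p (X p) (Y p) (Z p)) (W p)) + (fderiv ℝ (fderiv ℝ (fderiv ℝ C)) p (X p) (Z p) (fderiv ℝ (fderiv ℝ C) p (Y p) (W p)) + fderiv ℝ (fderiv ℝ C) p (Z p) (fderiv ℝ (fderiv ℝ (fderiv ℝ C)) p (X p) (Y p) (W p)))) - ((fderiv ℝ (fderiv ℝ (fderiv ℝ C)) p (X p) (Z p) (fderiv ℝ (fderiv ℝ C) p (Y p) (W p)) + fderiv ℝ (fderiv ℝ C) p (X p) (fderiv ℝ (fderiv ℝ (fderiv ℝ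 C)) p (Y p) (Z p) (W p))) + (fderiv ℝ (fderiv ℝ (fderiv ℝ C)) p (X p) (Y p) (fderiv ℝ (fderiv ℝ C) p (Z p) (W p)) + fderiv ℝ (fderiv ℝ C) p (Y p) (fderiv ℝ (fderiv ℝ (fderiv ℝ C)) p (X p) (Z p) (W p)))) from hzero.symm]
  abel
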